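/- Consider a StackMST(0,0) game whose red tree is a star centered at v0 with leaves u_1, …, u_t and nonnegative red costs c(v0, u_j). Let F be a set of blue edges (each joining two leaves of the red star) such that (V, F) is a forest of stars, with a designated center for each component having at least one edge (for a component with a single edge either endpoint may be designated as the center), and let L be the set of leaves of the stars of (V, F), i.e., the non-center vertices of positive degree. Then the revenue obtainable from F satisfies r(F) ≥ Σ_{v ∈ L} c(v0, v). -/

import Mathlib

namespace StackMST

variable {V : Type*}

/-- Sum of an edge-weight function over a set of edges. -/
noncomputable def esum (w : Sym2 V → ℝ) (s : Set (Sym2 V)) : ℝ := ∑ᶠ e ∈ s, w e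

/-- `M` is a spanning tree of `G`. -/
def IsSpanningTreeOf (G M : SimpleGraph V) : Prop := M ≤ G ∧ M.IsTree

/-- Total weight of `M`, where red edges (the edges of `T`) are weighted by `c`
and all other (blue) edges are weighted by `p`. -/
noncomputable def weight (T : SimpleGraph V) (c p : Sym2 V → ℝ) (M : SimpleGraph V) : ℝ :=
  esum c (M.edgeSet ∩ T.edgeSet) + esum p (M.edgeSet \ T.edgeSet)

/-- Total price of the blue edges of `M`. -/
noncomputable def blueRevenue (T : SimpleGraph V) (p : Sym2 V → ℝ) (M : SimpleGraph V) : ℝ :=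
  esum p (M.edgeSet \ T.edgeSet)

/-- The leader's revenue once `F` and `p` are fixed: the follower selects a
minimum-weight spanning tree of `T ⊔ F` and, among those, one maximizing the
total price of the blue edges it contains. -/
noncomputable def followerRevenue (T : SimpleGraph V) (c : Sym2 V → ℝ)
    (F : SimpleGraph V) (p : Sym2 V → ℝ) : ℝ :=
  sSup {r | ∃ M : SimpleGraph V, IsSpanningTreeOf (T ⊔ F) M ∧
    (∀ M' : SimpleGraph V, IsSpanningTreeOf (T ⊔ F) M' →
        weight T c p M ≤ weight T c p M') ∧
    r = blueRevenue T p M}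

/-- `F` is a set of blue edges: none of its edges is a red edge. -/
def IsBlueSet (T F : SimpleGraph V) : Prop := F ≤ Tᶜ

/-- `r(F)`: the best revenue the leader can obtain from the activated set `F`. -/
noncomputable def revenueOf (T : SimpleGraph V) (c : Sym2 V → ℝ) (F : SimpleGraph V) : ℝ :=
  sSup {r | ∃ p : Sym2 V → ℝ, (∀ e ∈ F.edgeSet, 0 ≤ p e) ∧ r = followerRevenue T c F p}

/-- Optimal revenue `r*(T, c)` of the StackMST(0,0) game on the red tree `T`. -/
noncomputable def optRevenue (T : SimpleGraph V) (c : Sym2 V → ℝ) : ℝ :=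
  sSup {r | ∃ (F : SimpleGraph V) (p : Sym2 V → ℝ), IsBlueSet T F ∧
    (∀ e ∈ F.edgeSet, 0 ≤ p e) ∧ r = followerRevenue T c F p}

/-- Total cost `c(T)` of the red edges. -/
noncomputable def redCost (T : SimpleGraph V) (c : Sym2 V → ℝ) : ℝ := esum c T.edgeSet

/-- Optimal revenue of the budgeted game StackMST(γ, Δ). -/
noncomputable def gammaOptRevenue (T : SimpleGraph V) (c γ : Sym2 V → ℝ) (Δ : ℝ) : ℝ :=
  sSup {r | ∃ F : SimpleGraph V, IsBlueSet T F ∧ esum γ F.edgeSet ≤ Δ ∧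
    r = revenueOf T c F}

end StackMST

namespace StackMST

/-- The star graph on `V` centered at `v0`: `v0` is joined to every other vertex. -/
def starGraph {V : Type*} (v0 : V) : SimpleGraph V :=
  SimpleGraph.fromRel (fun u _ => u = v0)

end StackMST


namespace StackMSTAux
open StackMST
open SimpleGraph hiding starGraph starGraph_adj
variable {V : Type*}

lemma starGraph_adj {v0 a b : V} : (starGraph v0).Adj a b ↔ a ≠ b ∧ (a = v0 ∨ b = v0) := by
  rw [starGraph, SimpleGraph.fromRel_adj]

lemma mem_star_edgeSet {v0 : V} {e : Sym2 V} (he : e ∈ (starGraph v0).edgeSet) : v0 ∈ e := by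
  induction e using Sym2.ind with
  | _ a b =>
    rw [SimpleGraph.mem_edgeSet, starGraph_adj] at he
    rcases he.2 with h | h <;> rw [Sym2.mem_iff] <;> [exact Or.inl h.symm; exact Or.inr h.symm]

lemma esum_nonneg {w : Sym2 V → ℝ} {s : Set (Sym2 V)} (h : ∀ e ∈ s, 0 ≤ w e) : 0 ≤ esum w s := by
  rw [esum, finsum_mem_def s w]
  exact finsum_nonneg (Set.indicator_nonneg h)

lemma esum_remove [Finite V] (w : Sym2 V → ℝ) {s : Set (Sym2 V)} {a : Sym2 V} (ha : a ∈ s) :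
    esum w s = esum w (s \ {a}) + w a := by
  have hs : s = (s \ {a}) ∪ {a} := by
    rw [Set.diff_union_self, Set.union_eq_self_of_subset_right (Set.singleton_subset_iff.mpr ha)]
  rw [esum, esum]
  conv_lhs => rw [hs]
  rw [finsum_mem_union (Set.disjoint_singleton_right.mpr (fun h => h.2 rfl)) (Set.toFinite _)
    (Set.toFinite _), finsum_mem_singleton]

lemma esum_insert [Finite V] (w : Sym2 V → ℝ) {s : Set (Sym2 V)} {a : Sym2 V} (ha : a ∉ s) :
    esum w (s ∪ {a}) = esum w s + w a := by
  rw [esum, esum, finsum_mem_union (Set.disjoint_singleton_right.mpr ha) (Set.toFinite _)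
    (Set.toFinite _), finsum_mem_singleton]

lemma star_reach [Nonempty V] (v0 x : V) : (starGraph v0).Reachable x v0 := by
  rcases eq_or_ne x v0 with rfl | h
  · exact Reachable.refl _
  · exact (starGraph_adj.mpr ⟨h, Or.inr rfl⟩).reachable

lemma star_isTree [Nonempty V] (v0 : V) : (starGraph v0).IsTree := by
  constructor
  · exact ⟨fun a b => (star_reach v0 a).trans (star_reach v0 b).symm⟩
  · intro x c hc
    classical
    have hne := hc.not_nil
    have hv0 : v0 ∈ c.support := by
      cases c with
      | nil => exact absurd Walk.nil_nil hne
      | @cons _ y _ h q =>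
        rcases (starGraph_adj.mp h).2 with rfl | rfl
        · exact Walk.start_mem_support _
        · rw [Walk.support_cons]
          exact List.mem_cons_of_mem _ (Walk.start_mem_support q)
    have hc2 := hc.rotate hv0
    set w := c.rotate _ hv0 with hw
    clear_value w
    cases w with
    | nil => exact hc2.ne_nil rfl
    | @cons _ y _ h q =>
      have hy0 : y ≠ v0 := fun hE => (starGraph_adj.mp h).1 hE.symm
      cases q with
      | nil => exact hy0 rfl
      | @cons _ z _ h2 q2 =>
        have hz : z = v0 := by
          rcases (starGraph_adj.mp h2).2 with rfl | rfl
          · exact absurd rfl hy0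
          · rfl
        subst hz
        have hnodup := hc2.edges_nodup
        rw [Walk.edges_cons, Walk.edges_cons] at hnodup
        exact (List.nodup_cons.mp hnodup).1 (by rw [Sym2.eq_swap]; exact List.mem_cons_self)

lemma not_mem_support_of_subsingleton_nbr {G : SimpleGraph V} {v : V}
    (hu : ∀ a b : V, G.Adj v a → G.Adj v b → a = b) {x : V} {c : G.Walk x x}
    (hc : c.IsCycle) : v ∉ c.support := by
  classical
  intro hv
  have hc2 := hc.rotate hv
  set w := c.rotate _ hv with hw
  clear_value w
  cases w with
  | nil => exact hc2.ne_nil rfl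
  | @cons _ y _ h q =>
    have hqne : ¬ q.Nil := by
      intro hnil
      exact G.irrefl (hnil.eq ▸ h)
    cases hqr : q.reverse with
    | nil =>
      have h2 := q.reverse_reverse
      rw [hqr] at h2
      simp at h2
      exact hqne (h2 ▸ Walk.nil_nil)
    | @cons _ z _ h' q2 =>
      have hz : z = y := hu z y h' h
      subst hz
      have hmem : s(v, z) ∈ q.edges := by
        have h1 : s(v, z) ∈ q.reverse.edges := by rw [hqr]; simp [Walk.edges_cons]
        rw [Walk.edges_reverse, List.mem_reverse] at h1
        exact h1
      have hnodup := hc2.edges_nodup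
      rw [Walk.edges_cons] at hnodup
      exact (List.nodup_cons.mp hnodup).1 hmem

lemma reach_del {M : SimpleGraph V} {v0 v : V} (hnbr : ∀ w, M.Adj v w → w = v0) :
    ∀ {w z : V}, M.Walk w z → z = v0 → w ≠ v →
      (M.deleteEdges {s(v0, v)}).Reachable w v0 := by
  intro w z W
  induction W with
  | nil => rintro rfl _; exact Reachable.refl _
  | @cons a b _ h _ ih =>
    rintro rfl ha
    by_cases hb : b = v
    · subst hb
      cases hnbr a h.symm
      exact Reachable.refl _
    · refine Reachable.trans (Adj.reachable ?_) (ih rfl hb)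
      rw [deleteEdges_adj]
      refine ⟨h, ?_⟩
      rw [Set.mem_singleton_iff, Sym2.eq_iff]
      rintro (⟨rfl, rfl⟩ | ⟨rfl, rfl⟩)
      · exact hb rfl
      · exact ha rfl

/-- Replacing the pendant edge `v0 v` (where `v0` is the unique neighbour of `v` in the
tree `M`) by the edge `u v` gives again a tree. -/
lemma swap_tree {M : SimpleGraph V} (hM : M.IsTree) {v0 u v : V}
    (huv : u ≠ v) (hv0 : v ≠ v0) (hnbr : ∀ w, M.Adj v w → w = v0) :
    M.Adj v v0 ∧ (M.deleteEdges {s(v0, v)} ⊔ SimpleGraph.edge u v).IsTree := by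
  classical
  have hne : Nonempty V := hM.isConnected.nonempty
  set M2 := M.deleteEdges {s(v0, v)} ⊔ SimpleGraph.edge u v with hM2
  have hAdj : M.Adj v v0 := by
    obtain ⟨W⟩ := hM.isConnected.preconnected v v0
    cases W with
    | nil => exact absurd rfl hv0
    | @cons _ y _ h q => exact (hnbr y h) ▸ h
  have hnbr2 : ∀ w, M2.Adj v w → w = u := by
    intro w hw
    rcases hw with hw | hw
    · rw [deleteEdges_adj] at hw
      exact absurd (by rw [hnbr w hw.1, Sym2.eq_swap]; exact rfl) hw.2
    · rw [edge_adj] at hw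
      rcases hw.1 with ⟨rfl, rfl⟩ | ⟨_, rfl⟩
      · rfl
      · rfl
  have keyreach : ∀ w : V, M2.Reachable w v0 := by
    intro w
    by_cases hw : w = v
    · subst hw
      have h1 : M2.Adj w u := by
        rw [hM2, sup_adj, edge_adj]
        exact Or.inr ⟨Or.inr ⟨rfl, rfl⟩, huv.symm⟩
      obtain ⟨W⟩ := hM.isConnected.preconnected u v0
      exact h1.reachable.trans ((reach_del hnbr W rfl huv).mono le_sup_left)
    · obtain ⟨W⟩ := hM.isConnected.preconnected w v0
      exact (reach_del hnbr W rfl hw).mono le_sup_left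
  refine ⟨hAdj, ?_, ?_⟩
  · exact ⟨fun a b => (keyreach a).trans (keyreach b).symm⟩
  · intro x c hc
    by_cases hvs : v ∈ c.support
    · exact not_mem_support_of_subsingleton_nbr
        (fun a b h1 h2 => (hnbr2 a h1).trans (hnbr2 b h2).symm) hc hvs
    · have hedges : ∀ e ∈ c.edges, e ∈ M.edgeSet := by
        intro e he
        have hv_not : v ∉ e := by
          intro hv_in
          induction e using Sym2.ind with
          | _ a b =>
            rcases Sym2.mem_iff.mp hv_in with rfl | rfl
            · exact hvs (Walk.fst_mem_support_of_mem_edges c he)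
            · exact hvs (Walk.snd_mem_support_of_mem_edges c he)
        have heM2 : e ∈ M2.edgeSet := c.edges_subset_edgeSet he
        rw [hM2, edgeSet_sup, edgeSet_deleteEdges, edge_edgeSet_of_ne huv] at heM2
        rcases heM2 with h | h
        · exact h.1
        · rw [Set.mem_singleton_iff] at h
          exact absurd (h ▸ Sym2.mem_mk_right u v) hv_not
      exact hM.IsAcyclic (c.transfer M hedges) (hc.transfer hedges)

end StackMSTAux

open StackMST


/-- Consider a StackMST(0,0) game whose red tree is a star
centered at `v0` (so its leaves are all other vertices) with nonnegative costs.
Let `F` be a set of blue edges joining leaves of the red star such that `(V, F)`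
is a forest of stars, with designated set of centers `C` (every edge of `F` joins
a center to a non-center, and every non-center vertex is incident to at most one
edge of `F`). Let `L` be the set of leaves of the stars of `(V, F)`, i.e. the
non-center vertices of positive degree. Then `r(F) ≥ Σ_{v ∈ L} c(v0, v)`. -/
theorem stackMST_star_forest_revenue {V : Type*} [Finite V] (v0 : V)
    (c : Sym2 V → ℝ) (hc : ∀ e ∈ (starGraph v0).edgeSet, 0 ≤ c e)
    (F : SimpleGraph V) (hFleaf : ∀ u v : V, F.Adj u v → u ≠ v0 ∧ v ≠ v0)
    (C : Set V)
    (hcen : ∀ u v : V, F.Adj u v → (u ∈ C ↔ v ∉ C))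
    (hdeg : ∀ v : V, v ∉ C → (F.neighborSet v).Subsingleton) :
    ∑ᶠ v ∈ {v : V | v ∉ C ∧ ∃ u, F.Adj u v}, c s(v0, v) ≤
      revenueOf (starGraph v0) c F := by
  classical
  have : Nonempty V := ⟨v0⟩
  open StackMSTAux in open SimpleGraph hiding starGraph starGraph_adj in
  set T := starGraph v0 with hTdef
  open StackMSTAux in open SimpleGraph hiding starGraph starGraph_adj in
  -- the leader's prices
  set p : Sym2 V → ℝ := fun e => Sym2.lift
    ⟨fun a b => (if a ∈ C then c s(v0, b) else 0) + (if b ∈ C then c s(v0, a) else 0),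
     fun a b => add_comm _ _⟩ e with hpdef
  open StackMSTAux in open SimpleGraph hiding starGraph starGraph_adj in
  have pval : ∀ a b : V, a ∈ C → b ∉ C → p s(a, b) = c s(v0, b) := by
    intro a b ha hb
    rw [hpdef]
    simp [Sym2.lift_mk, if_pos ha, if_neg hb]
  open StackMSTAux in open SimpleGraph hiding starGraph starGraph_adj in
  have pnonneg : ∀ e ∈ F.edgeSet, 0 ≤ p e := by
    intro e
    induction e using Sym2.ind with
    | _ a b =>
      intro he
      have hadj : F.Adj a b := he
      by_cases hCa : a ∈ C
      · rw [pval a b hCa ((hcen a b hadj).mp hCa)]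
        exact hc _ (starGraph_adj.mpr ⟨Ne.symm (hFleaf a b hadj).2, Or.inl rfl⟩)
      · have hCb : b ∈ C := not_not.mp (fun hb => hCa ((hcen a b hadj).mpr hb))
        rw [Sym2.eq_swap, pval b a hCb hCa]
        exact hc _ (starGraph_adj.mpr ⟨Ne.symm (hFleaf a b hadj).1, Or.inl rfl⟩)
  open StackMSTAux in open SimpleGraph hiding starGraph starGraph_adj in
  have Fblue : ∀ e ∈ F.edgeSet, e ∉ T.edgeSet := by
    intro e
    induction e using Sym2.ind with
    | _ a b =>
      intro he hT'
      have hadj : F.Adj a b := he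
      rcases Sym2.mem_iff.mp (mem_star_edgeSet hT') with h | h
      · exact (hFleaf a b hadj).1 h.symm
      · exact (hFleaf a b hadj).2 h.symm
  open StackMSTAux in open SimpleGraph hiding starGraph starGraph_adj in
  have hTspan : IsSpanningTreeOf (T ⊔ F) T := ⟨le_sup_left, star_isTree v0⟩
  open StackMSTAux in open SimpleGraph hiding starGraph starGraph_adj in
  have repair : ∀ n (M : SimpleGraph V), IsSpanningTreeOf (T ⊔ F) M →
      (∀ M', IsSpanningTreeOf (T ⊔ F) M' → weight T c p M ≤ weight T c p M') →
      (F.edgeSet \ M.edgeSet).ncard ≤ n →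
      ∃ M2, IsSpanningTreeOf (T ⊔ F) M2 ∧
        (∀ M', IsSpanningTreeOf (T ⊔ F) M' → weight T c p M2 ≤ weight T c p M') ∧ F ≤ M2 := by
    intro n
    induction n with
    | zero =>
      intro M hM hmin hn
      have h0 : (F.edgeSet \ M.edgeSet) = ∅ :=
        Set.ncard_eq_zero (Set.toFinite _) |>.mp (Nat.le_zero.mp hn)
      exact ⟨M, hM, hmin, SimpleGraph.edgeSet_subset_edgeSet.mp
        (Set.diff_eq_empty.mp h0)⟩
    | succ n ih =>
      intro M hM hmin hn
      by_cases hsub : F.edgeSet ⊆ M.edgeSet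
      · exact ⟨M, hM, hmin, SimpleGraph.edgeSet_subset_edgeSet.mp hsub⟩
      · -- build an improved tree
        have build : ∀ u v : V, F.Adj u v → u ∈ C → v ∉ C → s(u, v) ∉ M.edgeSet →
            ∃ M2, IsSpanningTreeOf (T ⊔ F) M2 ∧
              (∀ M', IsSpanningTreeOf (T ⊔ F) M' → weight T c p M2 ≤ weight T c p M') ∧
              F.edgeSet \ M2.edgeSet ⊂ F.edgeSet \ M.edgeSet := by
          intro u v hadj hCu hCv hMuv
          have huv : u ≠ v := hadj.ne
          have hv0 : v ≠ v0 := (hFleaf u v hadj).2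
          have hu0 : u ≠ v0 := (hFleaf u v hadj).1
          have hnbr : ∀ w, M.Adj v w → w = v0 := by
            intro w hw
            rcases hM.1 hw with hw' | hw'
            · rcases (starGraph_adj.mp hw').2 with h | h
              · exact absurd h hv0
              · exact h
            · have hwu : w = u := hdeg v hCv hw' hadj.symm
              subst hwu
              exact absurd hw.symm hMuv
          obtain ⟨hAdjvv0, htree2⟩ := swap_tree hM.2 huv hv0 hnbr
          set M2 := M.deleteEdges {s(v0, v)} ⊔ SimpleGraph.edge u v with hM2def
          have hE2 : M2.edgeSet = (M.edgeSet \ {s(v0, v)}) ∪ {s(u, v)} := by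
            rw [hM2def, SimpleGraph.edgeSet_sup _ _, SimpleGraph.edgeSet_deleteEdges,
              SimpleGraph.edge_edgeSet_of_ne huv]
          have hle2 : M2 ≤ T ⊔ F := by
            refine sup_le ((M.deleteEdges_le _).trans hM.1) (le_trans ?_ le_sup_right)
            intro x y hxy
            rw [SimpleGraph.edge_adj] at hxy
            rcases hxy.1 with ⟨rfl, rfl⟩ | ⟨rfl, rfl⟩
            · exact hadj
            · exact hadj.symm
          have hx_inM : s(v0, v) ∈ M.edgeSet := hAdjvv0.symm
          have hx_inT : s(v0, v) ∈ T.edgeSet := starGraph_adj.mpr ⟨Ne.symm hv0, Or.inl rfl⟩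
          have hy_ninT : s(u, v) ∉ T.edgeSet := by
            intro h
            rcases (starGraph_adj.mp h).2 with h' | h'
            · exact hu0 h'
            · exact hv0 h'
          have hsetc : M2.edgeSet ∩ T.edgeSet = (M.edgeSet ∩ T.edgeSet) \ {s(v0, v)} := by
            rw [hE2]
            ext f
            simp only [Set.mem_inter_iff, Set.mem_union, Set.mem_diff, Set.mem_singleton_iff]
            constructor
            · rintro ⟨⟨hfM, hfx⟩ | rfl, hfT⟩
              · exact ⟨⟨hfM, hfT⟩, hfx⟩
              · exact absurd hfT hy_ninT
            · rintro ⟨⟨hfM, hfT⟩, hfx⟩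
              exact ⟨Or.inl ⟨hfM, hfx⟩, hfT⟩
          have hsetp : M2.edgeSet \ T.edgeSet = (M.edgeSet \ T.edgeSet) ∪ {s(u, v)} := by
            rw [hE2]
            ext f
            simp only [Set.mem_union, Set.mem_diff, Set.mem_singleton_iff]
            constructor
            · rintro ⟨⟨hfM, _⟩ | rfl, hfT⟩
              · exact Or.inl ⟨hfM, hfT⟩
              · exact Or.inr rfl
            · rintro (⟨hfM, hfT⟩ | rfl)
              · exact ⟨Or.inl ⟨hfM, fun h => hfT (h ▸ hx_inT)⟩, hfT⟩
              · exact ⟨Or.inr rfl, hy_ninT⟩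
          have hw2 : weight T c p M2 = weight T c p M := by
            rw [weight, weight, hsetc, hsetp]
            rw [esum_insert p (fun h => hMuv h.1)]
            have h1 : esum c (M.edgeSet ∩ T.edgeSet)
                = esum c ((M.edgeSet ∩ T.edgeSet) \ {s(v0, v)}) + c s(v0, v) :=
              esum_remove c ⟨hx_inM, hx_inT⟩
            have h2 : p s(u, v) = c s(v0, v) := pval u v hCu hCv
            rw [h2]
            linarith
          have hmin2 : ∀ M', IsSpanningTreeOf (T ⊔ F) M' →
              weight T c p M2 ≤ weight T c p M' := by
            intro M' h'
            rw [hw2]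
            exact hmin M' h'
          have hssub : F.edgeSet \ M2.edgeSet ⊂ F.edgeSet \ M.edgeSet := by
            rw [Set.ssubset_def]
            constructor
            · rintro f ⟨hfF, hfM2⟩
              refine ⟨hfF, fun hfM => hfM2 ?_⟩
              rw [hE2]
              left
              refine ⟨hfM, fun h => ?_⟩
              rw [h] at hfF
              exact (hFleaf v0 v hfF).1 rfl
            · intro hsub'
              have hmem : s(u, v) ∈ F.edgeSet \ M2.edgeSet := hsub' ⟨hadj, hMuv⟩
              exact hmem.2 (by rw [hE2]; exact Or.inr rfl)
          exact ⟨M2, ⟨hle2, htree2⟩, hmin2, hssub⟩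
        obtain ⟨e, heF, heM⟩ := Set.not_subset.mp hsub
        obtain ⟨a, b, rfl⟩ : ∃ a b, e = s(a, b) := by
          induction e using Sym2.ind with
          | _ x y => exact ⟨x, y, rfl⟩
        have hadjab : F.Adj a b := heF
        have hbuilt : ∃ M2, IsSpanningTreeOf (T ⊔ F) M2 ∧
            (∀ M', IsSpanningTreeOf (T ⊔ F) M' → weight T c p M2 ≤ weight T c p M') ∧
            F.edgeSet \ M2.edgeSet ⊂ F.edgeSet \ M.edgeSet := by
          by_cases hCa : a ∈ C
          · exact build a b hadjab hCa ((hcen a b hadjab).mp hCa) heM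
          · have hCb : b ∈ C := not_not.mp (fun hb => hCa ((hcen a b hadjab).mpr hb))
            exact build b a hadjab.symm hCb hCa (by rw [Sym2.eq_swap]; exact heM)
        obtain ⟨M2, hM2, hmin2, hss⟩ := hbuilt
        refine ih M2 hM2 hmin2 ?_
        have hlt := Set.ncard_lt_ncard hss (Set.toFinite _)
        omega
  open StackMSTAux in open SimpleGraph hiding starGraph starGraph_adj in
  -- a minimum spanning tree exists
  have hminex := Set.exists_min_image {M : SimpleGraph V | IsSpanningTreeOf (T ⊔ F) M}
    (weight T c p) (Set.toFinite _) ⟨T, hTspan⟩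
  open StackMSTAux in open SimpleGraph hiding starGraph starGraph_adj in
  obtain ⟨M₀, hM₀, hmin₀⟩ := hminex
  open StackMSTAux in open SimpleGraph hiding starGraph starGraph_adj in
  obtain ⟨M, hMspan, hMmin, hFM⟩ := repair (F.edgeSet \ M₀.edgeSet).ncard M₀ hM₀
    (fun M' h' => hmin₀ M' h') le_rfl
  open StackMSTAux in open SimpleGraph hiding starGraph starGraph_adj in
  have hblue : M.edgeSet \ T.edgeSet = F.edgeSet := by
    apply Set.Subset.antisymm
    · rintro f ⟨hf1, hf2⟩
      have := SimpleGraph.edgeSet_mono hMspan.1 hf1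
      rw [SimpleGraph.edgeSet_sup] at this
      rcases this with h | h
      · exact absurd h hf2
      · exact h
    · intro f hf
      exact ⟨SimpleGraph.edgeSet_mono hFM hf, Fblue f hf⟩
  open StackMSTAux in open SimpleGraph hiding starGraph starGraph_adj in
  -- the sum over leaves equals the total blue revenue
  have hLsum : ∑ᶠ v ∈ {v : V | v ∉ C ∧ ∃ u, F.Adj u v}, c s(v0, v) = esum p F.edgeSet := by
    classical
    set uOf : V → V := fun v => if h : ∃ u, F.Adj u v then h.choose else v with huOfdef
    have huOf : ∀ v : V, (∃ u, F.Adj u v) → F.Adj (uOf v) v := by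
      intro v h
      rw [huOfdef]
      simp only [dif_pos h]
      exact h.choose_spec
    rw [esum]
    refine finsum_mem_eq_of_bijOn (fun v => s(uOf v, v)) ⟨?_, ?_, ?_⟩ ?_
    · rintro v ⟨hv1, hv2⟩
      exact huOf v hv2
    · rintro x ⟨hx1, hx2⟩ y ⟨hy1, hy2⟩ hxy
      rcases Sym2.eq_iff.mp hxy with ⟨_, h⟩ | ⟨h1, h2⟩
      · exact h
      · have hCx : uOf x ∈ C := (hcen (uOf x) x (huOf x hx2)).mpr hx1
        exact absurd (h1 ▸ hCx) hy1
    · intro f hf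
      obtain ⟨a, b, rfl⟩ : ∃ a b, f = s(a, b) := by
        induction f using Sym2.ind with
        | _ x y => exact ⟨x, y, rfl⟩
      have hadj : F.Adj a b := hf
      by_cases hCa : a ∈ C
      · have hCb := (hcen a b hadj).mp hCa
        refine ⟨b, ⟨hCb, ⟨a, hadj⟩⟩, ?_⟩
        have h1 : uOf b = a := hdeg b hCb (huOf b ⟨a, hadj⟩).symm hadj.symm
        simp only [h1]
      · have hCb : b ∈ C := not_not.mp (fun hb => hCa ((hcen a b hadj).mpr hb))
        refine ⟨a, ⟨hCa, ⟨b, hadj.symm⟩⟩, ?_⟩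
        have h1 : uOf a = b := hdeg a hCa (huOf a ⟨b, hadj.symm⟩).symm hadj
        simp only [h1]
        exact Sym2.eq_swap
    · rintro v ⟨hv1, hv2⟩
      exact (pval (uOf v) v ((hcen _ _ (huOf v hv2)).mpr hv1) hv1).symm
  open StackMSTAux in open SimpleGraph hiding starGraph starGraph_adj in
  have hrev : blueRevenue T p M = esum p F.edgeSet := by
    rw [blueRevenue, hblue]
  open StackMSTAux in open SimpleGraph hiding starGraph starGraph_adj in
  have hbdd_inner : BddAbove {r | ∃ M' : SimpleGraph V, IsSpanningTreeOf (T ⊔ F) M' ∧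
      (∀ M'' : SimpleGraph V, IsSpanningTreeOf (T ⊔ F) M'' →
        weight T c p M' ≤ weight T c p M'') ∧ r = blueRevenue T p M'} := by
    refine Set.Finite.bddAbove ((Set.finite_range (blueRevenue T p)).subset ?_)
    rintro r ⟨M', _, _, rfl⟩
    exact ⟨M', rfl⟩
  open StackMSTAux in open SimpleGraph hiding starGraph starGraph_adj in
  have h1 : esum p F.edgeSet ≤ followerRevenue T c F p := by
    rw [← hrev, followerRevenue]
    exact le_csSup hbdd_inner ⟨M, hMspan, hMmin, rfl⟩
  open StackMSTAux in open SimpleGraph hiding starGraph starGraph_adj in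
  have houter_bdd : BddAbove {r | ∃ p' : Sym2 V → ℝ, (∀ e ∈ F.edgeSet, 0 ≤ p' e) ∧
      r = followerRevenue T c F p'} := by
    refine ⟨redCost T c, ?_⟩
    rintro r ⟨p', hp', rfl⟩
    rw [followerRevenue]
    apply Real.sSup_le
    · rintro r' ⟨M', hM'span, hM'min, rfl⟩
      have hb : blueRevenue T p' M' ≤ weight T c p' M' := by
        rw [blueRevenue, weight]
        have h0 := esum_nonneg (w := c) (s := M'.edgeSet ∩ T.edgeSet)
          (fun e he => hc e he.2)
        linarith
      refine hb.trans ((hM'min T hTspan).trans ?_)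
      rw [weight, Set.inter_self, Set.diff_self, redCost]
      have h0 : esum p' (∅ : Set (Sym2 V)) = 0 := by
        rw [esum, finsum_mem_empty]
      rw [h0, add_zero]
    · exact esum_nonneg (fun e he => hc e he)
  open StackMSTAux in open SimpleGraph hiding starGraph starGraph_adj in
  calc ∑ᶠ v ∈ {v : V | v ∉ C ∧ ∃ u, F.Adj u v}, c s(v0, v)
      = esum p F.edgeSet := hLsum
    _ ≤ followerRevenue T c F p := h1
    _ ≤ revenueOf T c F := le_csSup houter_bdd ⟨p, pnonneg, rfl⟩
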